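/- Let n ≥ 1, p ∈ [1,∞) and ρ ∈ (0,1). There exists a constant c ≥ 1, depending only on p, n and ρ, with the following property. For all R > r > 0 with r/R = ρ, every x* ∈ ℝⁿ, every Lebesgue-measurable set ω ⊆ Q_R(x*) with |ω| ≤ (R−r)ⁿ/2^{n+1}, every affine map A: ℝⁿ → ℝⁿ, and every u ∈ L^∞(Q_R(x*); ℝⁿ), there exists an affine map a: ℝⁿ → ℝⁿ such that (i) sup_{x ∈ Q_r(x*)} |a(x)| ≤ ess sup_{x ∈ Q_R(x*)} |u(x)|, (ii) ‖u − a‖_{L^p(Q_R(x*)∖ω; ℝⁿ)} ≤ c ‖u − A‖_{L^p(Q_R(x*)∖ω; ℝⁿ)}, and (iii) if the linear part of A is skew-symmetric then the linear part of a is skew-symmetric. -/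

import Mathlib

open MeasureTheory Set
open scoped RealInnerProductSpace

open scoped ENNReal


theorem cube_meas (n : ℕ) (c : EuclideanSpace ℝ (Fin n)) (δ : ℝ) :
    MeasurableSet {x : EuclideanSpace ℝ (Fin n) | ∀ i, |x i - c i| < δ} := by
  have h : {x : EuclideanSpace ℝ (Fin n) | ∀ i, |x i - c i| < δ}
      = ⋂ i, (fun x : EuclideanSpace ℝ (Fin n) => x i) ⁻¹' {t | |t - c i| < δ} := by
    ext x; simp [Set.mem_iInter]
  rw [h]
  refine MeasurableSet.iInter fun i => ?_
  have hm : Measurable (fun x : EuclideanSpace ℝ (Fin n) => x i) :=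
    (measurable_pi_apply i).comp (MeasurableEquiv.toLp 2 (Fin n → ℝ)).symm.measurable
  exact hm (measurableSet_lt (by fun_prop) measurable_const)

theorem cube_vol (n : ℕ) (c : EuclideanSpace ℝ (Fin n)) (δ : ℝ) (hδ : 0 ≤ δ) :
    volume {x : EuclideanSpace ℝ (Fin n) | ∀ i, |x i - c i| < δ} = ENNReal.ofReal ((2*δ)^n) := by
  have hmp := EuclideanSpace.volume_preserving_symm_measurableEquiv_toLp (Fin n)
  have h : {x : EuclideanSpace ℝ (Fin n) | ∀ i, |x i - c i| < δ}
      = (MeasurableEquiv.toLp 2 (Fin n → ℝ)).symm ⁻¹' (Set.pi univ fun i => Ioo (c i - δ) (c i + δ)) := by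
    ext x
    have hx : ∀ i, (MeasurableEquiv.toLp 2 (Fin n → ℝ)).symm x i = x i := fun _ => rfl
    simp only [Set.mem_pi, Set.mem_preimage, mem_setOf_eq, Set.mem_univ, forall_true_left,
      mem_Ioo, hx, abs_sub_lt_iff]
    constructor
    · intro h i; constructor <;> linarith [(h i).1, (h i).2]
    · intro h i; constructor <;> linarith [(h i).1, (h i).2]
  rw [h, hmp.measure_preimage
    (MeasurableSet.univ_pi fun i => measurableSet_Ioo).nullMeasurableSet, volume_pi_pi]
  have h2 : ∀ i : Fin n, c i + δ - (c i - δ) = 2*δ := fun i => by ring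
  simp only [Real.volume_Ioo, h2, Finset.prod_const, Finset.card_univ, Fintype.card_fin]
  rw [← ENNReal.ofReal_pow (by linarith)]

theorem refl_lower (n : ℕ) (x₁ : EuclideanSpace ℝ (Fin n)) (δ : ℝ) (hδ : 0 ≤ δ)
    (f : EuclideanSpace ℝ (Fin n) → ℝ) (hf : Continuous f) (s : ℝ)
    (hsym : ∀ x, f x + f ((2:ℝ) • x₁ - x) = 2 * s) :
    ENNReal.ofReal ((2*δ)^n / 2) ≤
      volume ({x : EuclideanSpace ℝ (Fin n) | ∀ i, |x i - x₁ i| < δ} ∩ {x | s ≤ f x}) := by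
  set B : Set (EuclideanSpace ℝ (Fin n)) := {x | ∀ i, |x i - x₁ i| < δ} with hB
  set S : Set (EuclideanSpace ℝ (Fin n)) := B ∩ {x | s ≤ f x} with hS
  have hmeasS : MeasurableSet S :=
    (cube_meas n x₁ δ).inter (measurableSet_le measurable_const hf.measurable)
  have hT := Measure.measurePreserving_sub_left
    (volume : Measure (EuclideanSpace ℝ (Fin n))) ((2:ℝ) • x₁)
  have hsub : B ⊆ S ∪ (fun x => (2:ℝ) • x₁ - x) ⁻¹' S := by
    intro x hx
    rcases le_or_gt s (f x) with h | h
    · exact Or.inl ⟨hx, h⟩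
    · refine Or.inr ⟨fun i => ?_, ?_⟩
      · have h2 : ((2:ℝ) • x₁ - x) i - x₁ i = -(x i - x₁ i) := by
          simp only [PiLp.sub_apply, PiLp.smul_apply, smul_eq_mul]; ring
        rw [h2, abs_neg]; exact hx i
      · have h3 := hsym x; simp only [mem_setOf_eq]; linarith
  have h1 : volume B ≤ 2 * volume S := by
    calc volume B ≤ volume S + volume ((fun x => (2:ℝ) • x₁ - x) ⁻¹' S) :=
          le_trans (measure_mono hsub) (measure_union_le _ _)
      _ = 2 * volume S := by
          rw [hT.measure_preimage hmeasS.nullMeasurableSet, two_mul]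
  have h2 : volume B = ENNReal.ofReal ((2*δ)^n) := cube_vol n x₁ δ hδ
  rw [ENNReal.ofReal_div_of_pos two_pos, ENNReal.ofReal_ofNat]
  exact ENNReal.div_le_of_le_mul' (h2 ▸ h1)

set_option maxHeartbeats 2000000 in
/-- Affine approximation of bounded functions (Lemma A.1 of the paper).
For `n ≥ 1`, `p ∈ [1, ∞)` and `ρ = r/R ∈ (0, 1)` there is `c ≥ 1` depending only on `p, n, ρ`
such that: for all `R > r > 0` with `r/R = ρ`, every center `x*`, every measurable
`ω ⊆ Q_R(x*)` with `|ω| ≤ (R−r)ⁿ/2^{n+1}`, every affine `A : ℝⁿ → ℝⁿ` and every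
`u ∈ L^∞(Q_R(x*); ℝⁿ)`, there is an affine `a : ℝⁿ → ℝⁿ` with
(i) `sup_{Q_r(x*)} |a| ≤ ess sup_{Q_R(x*)} |u|`,
(ii) `‖u − a‖_{L^p(Q_R(x*)∖ω)} ≤ c ‖u − A‖_{L^p(Q_R(x*)∖ω)}`, and
(iii) if the linear part of `A` is skew-symmetric, so is that of `a`. -/
theorem stmt_0 (n : ℕ) (hn : 1 ≤ n) (p : ℝ) (hp : 1 ≤ p) (ρ : ℝ) (hρ : ρ ∈ Set.Ioo (0 : ℝ) 1) :
    ∃ c : ℝ, 1 ≤ c ∧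
      ∀ (R r : ℝ), 0 < r → r < R → r / R = ρ →
      ∀ x₀ : EuclideanSpace ℝ (Fin n),
      ∀ ω : Set (EuclideanSpace ℝ (Fin n)), MeasurableSet ω →
        ω ⊆ {x | ∀ i, |x i - x₀ i| < R / 2} →
        volume ω ≤ ENNReal.ofReal ((R - r) ^ n / 2 ^ (n + 1)) →
      ∀ A : EuclideanSpace ℝ (Fin n) →ᵃ[ℝ] EuclideanSpace ℝ (Fin n),
      ∀ u : EuclideanSpace ℝ (Fin n) → EuclideanSpace ℝ (Fin n),
        MemLp u ⊤ (volume.restrict {x | ∀ i, |x i - x₀ i| < R / 2}) →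
        ∃ a : EuclideanSpace ℝ (Fin n) →ᵃ[ℝ] EuclideanSpace ℝ (Fin n),
          (∀ x : EuclideanSpace ℝ (Fin n), (∀ i, |x i - x₀ i| < r / 2) →
            ENNReal.ofReal ‖a x‖ ≤
              eLpNorm u ⊤ (volume.restrict {x | ∀ i, |x i - x₀ i| < R / 2})) ∧
          eLpNorm (fun x => u x - a x) (ENNReal.ofReal p)
              (volume.restrict ({x | ∀ i, |x i - x₀ i| < R / 2} \ ω)) ≤
            ENNReal.ofReal c *
              eLpNorm (fun x => u x - A x) (ENNReal.ofReal p)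
                (volume.restrict ({x | ∀ i, |x i - x₀ i| < R / 2} \ ω)) ∧
          ((∀ x y : EuclideanSpace ℝ (Fin n), ⟪A.linear x, y⟫ = -⟪x, A.linear y⟫) →
            ∀ x y : EuclideanSpace ℝ (Fin n), ⟪a.linear x, y⟫ = -⟪x, a.linear y⟫) := by
  obtain ⟨hρ0, hρ1⟩ := hρ
  have hρn : (0:ℝ) < (1 - ρ)^n := pow_pos (by linarith) n
  refine ⟨1 + 12 / (ρ * (1 - ρ)^n), le_add_of_nonneg_right (by positivity), ?_⟩
  intro R r hr hrR hrρ x₀ ω hωm hωsub hωvol A u hu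
  have hR : 0 < R := lt_trans hr hrR
  have hrρR : r = ρ * R := by field_simp at hrρ; linarith
  set QR : Set (EuclideanSpace ℝ (Fin n)) := {x | ∀ i, |x i - x₀ i| < R / 2} with hQR
  set μR := volume.restrict QR with hμR
  set μ' := volume.restrict (QR \ ω) with hμ'
  have hQRm : MeasurableSet QR := cube_meas n x₀ (R/2)
  have hAcont : Continuous A := A.continuous_of_finiteDimensional
  set Mℰ := eLpNorm u ⊤ μR with hMℰ
  have hMfin : Mℰ ≠ ⊤ := hu.2.ne
  set M := Mℰ.toReal with hM
  have hM0 : 0 ≤ M := ENNReal.toReal_nonneg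
  have hMℰ_eq : ENNReal.ofReal M = Mℰ := ENNReal.ofReal_toReal hMfin
  -- the compact cube and the maximum of ‖A‖ on it
  set K : Set (EuclideanSpace ℝ (Fin n)) := {x | ∀ i, |x i - x₀ i| ≤ r / 2} with hK
  have hKclosed : IsClosed K := by
    have : K = ⋂ i, {x : EuclideanSpace ℝ (Fin n) | |x i - x₀ i| ≤ r/2} := by
      ext x; simp [hK, Set.mem_iInter]
    rw [this]
    refine isClosed_iInter fun i => ?_
    have hc : Continuous fun x : EuclideanSpace ℝ (Fin n) => |x i - x₀ i| :=
      ((EuclideanSpace.proj i).continuous.sub continuous_const).abs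
    exact isClosed_le hc continuous_const
  have hKbdd : Bornology.IsBounded K := by
    rw [Metric.isBounded_iff_subset_closedBall x₀]
    refine ⟨Real.sqrt (n * (r/2)^2), fun x hx => ?_⟩
    rw [Metric.mem_closedBall, EuclideanSpace.dist_eq]
    refine Real.sqrt_le_sqrt ?_
    calc ∑ i, dist (x i) (x₀ i) ^ 2 ≤ ∑ _i : Fin n, (r/2)^2 := by
          refine Finset.sum_le_sum fun i _ => ?_
          have := hx i
          have h2 : dist (x i) (x₀ i) = |x i - x₀ i| := Real.dist_eq _ _
          rw [h2]
          nlinarith [abs_nonneg (x i - x₀ i)]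
      _ = n * (r/2)^2 := by rw [Finset.sum_const, Finset.card_univ, Fintype.card_fin]; ring
  have hKcompact : IsCompact K := Metric.isCompact_of_isClosed_isBounded hKclosed hKbdd
  have hKne : K.Nonempty := ⟨x₀, fun i => by simp; positivity⟩
  obtain ⟨x₁, hx₁K, hmax⟩ := hKcompact.exists_isMaxOn hKne (hAcont.norm.continuousOn)
  set s := ‖A x₁‖ with hs
  have hsmax : ∀ x ∈ K, ‖A x‖ ≤ s := fun x hx => hmax hx
  have hQrK : {x : EuclideanSpace ℝ (Fin n) | ∀ i, |x i - x₀ i| < r / 2} ⊆ K :=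
    fun x hx i => le_of_lt (hx i)
  -- a.e. bound on u
  have haeM : ∀ᵐ x ∂μR, ‖u x‖ ≤ M := by
    have h1 : ∀ᵐ x ∂μR, (‖u x‖₊ : ℝ≥0∞) ≤ eLpNormEssSup u μR := ae_le_eLpNormEssSup
    have h2 : eLpNormEssSup u μR = Mℰ := by rw [hMℰ, eLpNorm_exponent_top]
    filter_upwards [h1] with x hx
    rw [h2] at hx
    have := ENNReal.toReal_mono hMfin hx
    simpa using this
  rcases le_or_gt s M with hcase | hcase
  · -- Case 1 : a = A
    refine ⟨A, fun x hx => ?_, ?_, fun h => h⟩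
    · rw [← hMℰ_eq]
      exact ENNReal.ofReal_le_ofReal (le_trans (hsmax x (hQrK hx)) hcase)
    · refine le_mul_of_one_le_left zero_le ?_
      rw [← ENNReal.ofReal_one]
      exact ENNReal.ofReal_le_ofReal (le_add_of_nonneg_right (by positivity))
  · -- Case 2 : a = (M/s) • A
    have hs0 : 0 < s := lt_of_le_of_lt hM0 hcase
    set a := (M / s) • A with ha
    have hax : ∀ x, a x = (M / s) • A x := fun x => by
      rw [ha, AffineMap.coe_smul]; rfl
    have hMs1 : M / s ≤ 1 := by
      rw [div_le_one hs0]; exact le_of_lt hcase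
    have hMs0 : 0 ≤ M / s := by positivity
    refine ⟨a, fun x hx => ?_, ?_, fun hskew x y => ?_⟩
    · -- (i)
      rw [← hMℰ_eq]
      refine ENNReal.ofReal_le_ofReal ?_
      rw [hax, norm_smul, Real.norm_eq_abs, abs_of_nonneg hMs0]
      calc M / s * ‖A x‖ ≤ M / s * s :=
            mul_le_mul_of_nonneg_left (hsmax x (hQrK hx)) hMs0
        _ = M := by field_simp
    · -- (ii)
      set pe := ENNReal.ofReal p with hpe
      have hp0 : 0 < p := lt_of_lt_of_le one_pos hp
      have hpe0 : pe ≠ 0 := by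
        rw [hpe, Ne, ENNReal.ofReal_eq_zero]; linarith
      have hpetop : pe ≠ ⊤ := ENNReal.ofReal_ne_top
      have hpet : pe.toReal = p := ENNReal.toReal_ofReal (le_of_lt hp0)
      have hpe1 : 1 ≤ pe := by
        rw [hpe, ← ENNReal.ofReal_one]; exact ENNReal.ofReal_le_ofReal hp
      have hx₀K : x₀ ∈ K := fun i => by
        simp only [sub_self, abs_zero]; positivity
      -- global bound on ‖A x‖ over QR
      have hAbd : ∀ x ∈ QR, ‖A x‖ ≤ 3 * s / ρ := by
        intro x hx
        have hyK : x₀ + ρ • (x - x₀) ∈ K := by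
          intro i
          have h1 : (x₀ + ρ • (x - x₀)) i - x₀ i = ρ * (x i - x₀ i) := by
            simp only [PiLp.add_apply, PiLp.smul_apply, PiLp.sub_apply, smul_eq_mul]; ring
          rw [h1, abs_mul, abs_of_pos hρ0]
          have h2 := le_of_lt (hx i)
          calc ρ * |x i - x₀ i| ≤ ρ * (R/2) := mul_le_mul_of_nonneg_left h2 (le_of_lt hρ0)
            _ = r / 2 := by rw [hrρR]; ring
        have hAy : A (x₀ + ρ • (x - x₀)) = A x₀ + ρ • A.linear (x - x₀) := by
          have h1 : A ((ρ • (x - x₀)) +ᵥ x₀) = A.linear (ρ • (x - x₀)) +ᵥ A x₀ := A.map_vadd _ _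
          simpa [vadd_eq_add, LinearMap.map_smul, add_comm] using h1
        have hAx : A x = A x₀ + A.linear (x - x₀) := by
          have h1 : A ((x - x₀) +ᵥ x₀) = A.linear (x - x₀) +ᵥ A x₀ := A.map_vadd _ _
          simpa [vadd_eq_add, add_comm] using h1
        have hAx₀ : ‖A x₀‖ ≤ s := hsmax x₀ hx₀K
        have h2 : ‖A x₀ + ρ • A.linear (x - x₀)‖ ≤ s := by
          rw [← hAy]; exact hsmax _ hyK
        have h3 : ρ * ‖A.linear (x - x₀)‖ ≤ 2 * s := by
          have h5 := norm_sub_le (A x₀ + ρ • A.linear (x - x₀)) (A x₀)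
          rw [add_sub_cancel_left, norm_smul, Real.norm_eq_abs, abs_of_pos hρ0] at h5
          linarith
        have h6 : ‖A x‖ ≤ ‖A x₀‖ + ‖A.linear (x - x₀)‖ := by
          rw [hAx]; exact norm_add_le _ _
        have h7 : ρ * ‖A x‖ ≤ ρ * ‖A x₀‖ + ρ * ‖A.linear (x - x₀)‖ := by
          rw [← mul_add]
          exact mul_le_mul_of_nonneg_left h6 (le_of_lt hρ0)
        have h8 : ρ * ‖A x₀‖ ≤ s :=
          le_trans (mul_le_of_le_one_left (norm_nonneg _) (le_of_lt hρ1)) hAx₀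
        rw [le_div_iff₀ hρ0]
        linarith
      -- the half-cube set S
      set δ := (R - r)/2 with hδ
      have hδ0 : (0:ℝ) ≤ δ := by rw [hδ]; linarith
      set v := s⁻¹ • A x₁ with hv
      have hvnorm : ‖v‖ = 1 := by
        rw [hv, norm_smul, Real.norm_eq_abs, abs_of_pos (inv_pos.mpr hs0), ← hs]
        field_simp
      set f : EuclideanSpace ℝ (Fin n) → ℝ := fun x => ⟪A x, v⟫ with hf
      have hfcont : Continuous f := hAcont.inner continuous_const
      have hA2 : ∀ x, A ((2:ℝ) • x₁ - x) = (2:ℝ) • A x₁ - A x := by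
        intro x
        have h1 : A ((x₁ - x) +ᵥ x₁) = A.linear (x₁ - x) +ᵥ A x₁ := A.map_vadd _ _
        have h2 : A.linear (x₁ - x) = A x₁ - A x := by
          rw [show x₁ - x = x₁ -ᵥ x from rfl, A.linearMap_vsub]; rfl
        have h3 : (2:ℝ) • x₁ - x = (x₁ - x) +ᵥ x₁ := by
          rw [vadd_eq_add, two_smul]; abel
        rw [h3, h1, h2, vadd_eq_add, two_smul]; abel
      have hfx₁ : ⟪A x₁, v⟫ = s := by
        rw [hv, real_inner_smul_right, real_inner_self_eq_norm_mul_norm, ← hs]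
        field_simp
      have hsymm : ∀ x, f x + f ((2:ℝ) • x₁ - x) = 2 * s := by
        intro x
        have h1 : f ((2:ℝ) • x₁ - x) = 2 * s - f x := by
          simp only [hf, hA2 x, inner_sub_left, real_inner_smul_left, hfx₁]
        rw [h1]; ring
      set S := {x : EuclideanSpace ℝ (Fin n) | ∀ i, |x i - x₁ i| < δ} ∩ {x | s ≤ f x} with hSdef
      have hSm : MeasurableSet S :=
        (cube_meas n x₁ δ).inter (measurableSet_le measurable_const hfcont.measurable)
      have hSvol : ENNReal.ofReal ((R - r)^n/2) ≤ volume S := by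
        have h1 := refl_lower n x₁ δ hδ0 f hfcont s hsymm
        have h2 : 2 * δ = R - r := by rw [hδ]; ring
        rw [h2] at h1
        exact h1
      have hSsub : S ⊆ QR := by
        intro x hx i
        have h1 := hx.1 i
        have h2 : |x₁ i - x₀ i| ≤ r/2 := hx₁K i
        have h3 : |x i - x₀ i| ≤ |x i - x₁ i| + |x₁ i - x₀ i| := abs_sub_le _ _ _
        simp only [mem_setOf_eq]
        rw [hδ] at h1
        linarith
      have hSA : ∀ x ∈ S, s ≤ ‖A x‖ := by
        intro x hx
        have h1 : f x ≤ ‖A x‖ := by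
          calc f x ≤ ‖A x‖ * ‖v‖ := real_inner_le_norm _ _
            _ = ‖A x‖ := by rw [hvnorm, mul_one]
        exact le_trans hx.2 h1
      have hq0 : (0:ℝ) ≤ (R - r)^n := pow_nonneg (by linarith) n
      have hSω : ENNReal.ofReal ((R - r)^n/4) ≤ volume (S \ ω) := by
        have h1 : volume S - volume ω ≤ volume (S \ ω) := le_measure_diff
        have h2 : ENNReal.ofReal ((R - r)^n/2) - ENNReal.ofReal ((R - r)^n/2^(n+1)) ≤
            volume S - volume ω := tsub_le_tsub hSvol hωvol
        rw [← ENNReal.ofReal_sub _ (by positivity)] at h2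
        refine le_trans (le_trans (ENNReal.ofReal_le_ofReal ?_) h2) h1
        have h4 : (4:ℝ) ≤ 2^(n+1) := by
          calc (4:ℝ) = 2^2 := by norm_num
            _ ≤ 2^(n+1) := pow_le_pow_right₀ (by norm_num) (by omega)
        have h5 : (R - r)^n/2^(n+1) ≤ (R - r)^n/4 := by gcongr <;> norm_num
        linarith
      set L := eLpNorm (fun x => u x - A x) pe μ' with hL
      set t := ENNReal.ofReal (s - M) with ht
      set V := volume (S \ ω) with hV
      have hLlow : t * V ^ (1/p) ≤ L := by
        have hmono : eLpNorm (fun x => u x - A x) pe (volume.restrict (S \ ω)) ≤ L := by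
          rw [hL, hμ']
          exact eLpNorm_mono_measure _ (Measure.restrict_mono (diff_subset_diff_left hSsub) le_rfl)
        have hae : ∀ᵐ x ∂(volume.restrict (S \ ω)), ‖(s - M : ℝ)‖ ≤ ‖u x - A x‖ := by
          have h1 : ∀ᵐ x ∂(volume.restrict (S \ ω)), ‖u x‖ ≤ M :=
            ae_restrict_of_ae_restrict_of_subset (fun x hx => hSsub hx.1) haeM
          have h2 : ∀ᵐ x ∂(volume.restrict (S \ ω)), x ∈ S \ ω := ae_restrict_mem (hSm.diff hωm)
          filter_upwards [h1, h2] with x hx1 hx2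
          rw [Real.norm_eq_abs, abs_of_nonneg (by linarith : (0:ℝ) ≤ s - M)]
          have h3 : s ≤ ‖A x‖ := hSA x hx2.1
          have h4 : ‖A x‖ - ‖u x‖ ≤ ‖A x - u x‖ := norm_sub_norm_le _ _
          rw [norm_sub_rev] at h4
          linarith
        have h5 := eLpNorm_mono_ae (p := pe) (μ := volume.restrict (S \ ω))
          (f := fun _ : EuclideanSpace ℝ (Fin n) => (s - M : ℝ))
          (g := fun x => u x - A x) hae
        rw [eLpNorm_const' (s - M : ℝ) hpe0 hpetop, Measure.restrict_apply_univ, hpet] at h5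
        have h6 : ‖(s - M : ℝ)‖ₑ = t := by
          rw [ht, ← Real.enorm_eq_ofReal (by linarith : (0:ℝ) ≤ s - M)]
        rw [h6] at h5
        exact le_trans h5 hmono
      have hacont : Continuous a := a.continuous_of_finiteDimensional
      have hDup : eLpNorm (fun x => A x - a x) pe μ' ≤
          (ENNReal.ofReal (R^n)) ^ (1/p) * (ENNReal.ofReal (3/ρ) * t) := by
        have hbd : ∀ᵐ x ∂μ', ‖A x - a x‖ ≤ 3 * (s - M) / ρ := by
          have h2 : ∀ᵐ x ∂μ', x ∈ QR \ ω := ae_restrict_mem (hQRm.diff hωm)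
          filter_upwards [h2] with x hx
          rw [hax]
          have h3 : A x - (M/s) • A x = (1 - M/s) • A x := by
            rw [sub_smul, one_smul]
          rw [h3, norm_smul, Real.norm_eq_abs, abs_of_nonneg (by linarith)]
          have h4 := hAbd x hx.1
          have h4' : ‖A x‖ * ρ ≤ 3 * s := by
            rw [le_div_iff₀ hρ0] at h4; linarith
          have h5 : (1 - M/s) = (s - M)/s := by field_simp
          rw [h5, div_mul_eq_mul_div, div_le_div_iff₀ hs0 hρ0]
          nlinarith [norm_nonneg (A x)]
        have h6 := eLpNorm_le_of_ae_bound (p := pe) hbd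
        refine le_trans h6 ?_
        have h7 : μ' univ ≤ ENNReal.ofReal (R^n) := by
          rw [hμ', Measure.restrict_apply_univ]
          calc volume (QR \ ω) ≤ volume QR := measure_mono diff_subset
            _ = ENNReal.ofReal ((2 * (R/2))^n) := cube_vol n x₀ (R/2) (by linarith)
            _ = ENNReal.ofReal (R^n) := by
                congr 2
                rw [mul_div_cancel₀]
                norm_num
        have h8 : ENNReal.ofReal (3 * (s - M) / ρ) = ENNReal.ofReal (3/ρ) * t := by
          rw [ht, ← ENNReal.ofReal_mul (by positivity)]
          congr 1; field_simp
        rw [h8, ← hpet, one_div]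
        exact mul_le_mul' (ENNReal.rpow_le_rpow h7 (by positivity)) le_rfl
      have hWV : (ENNReal.ofReal (R^n)) ^ (1/p) ≤ ENNReal.ofReal (4/(1 - ρ)^n) * V ^ (1/p) := by
        have h1 : ENNReal.ofReal (R^n) ≤
            ENNReal.ofReal (4/(1 - ρ)^n) * ENNReal.ofReal ((R - r)^n/4) := by
          rw [← ENNReal.ofReal_mul (by positivity)]
          refine ENNReal.ofReal_le_ofReal ?_
          have h2 : 4/(1 - ρ)^n * ((R - r)^n/4) = (R - r)^n/(1 - ρ)^n := by
            field_simp
          rw [h2]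
          have hRr : R - r = R * (1 - ρ) := by rw [hrρR]; ring
          rw [hRr, mul_pow, mul_div_assoc, div_self (ne_of_gt hρn), mul_one]
        have h2 : ENNReal.ofReal (R^n) ≤ ENNReal.ofReal (4/(1 - ρ)^n) * V :=
          le_trans h1 (mul_le_mul' le_rfl hSω)
        have hK1 : (1:ℝ≥0∞) ≤ ENNReal.ofReal (4/(1 - ρ)^n) := by
          rw [← ENNReal.ofReal_one]
          apply ENNReal.ofReal_le_ofReal
          rw [le_div_iff₀ hρn]
          nlinarith [pow_le_one₀ (n := n) (by linarith : (0:ℝ) ≤ 1 - ρ) (by linarith : (1:ℝ) - ρ ≤ 1)]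
        calc (ENNReal.ofReal (R^n))^(1/p) ≤ (ENNReal.ofReal (4/(1 - ρ)^n) * V)^(1/p) :=
              ENNReal.rpow_le_rpow h2 (by positivity)
          _ = (ENNReal.ofReal (4/(1 - ρ)^n))^(1/p) * V^(1/p) :=
              ENNReal.mul_rpow_of_nonneg _ _ (by positivity)
          _ ≤ ENNReal.ofReal (4/(1 - ρ)^n) * V^(1/p) := by
              refine mul_le_mul' ?_ le_rfl
              calc (ENNReal.ofReal (4/(1 - ρ)^n))^(1/p) ≤ (ENNReal.ofReal (4/(1 - ρ)^n))^(1:ℝ) :=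
                    ENNReal.rpow_le_rpow_of_exponent_le hK1
                      (by rw [div_le_one (by linarith)]; linarith)
                _ = ENNReal.ofReal (4/(1 - ρ)^n) := ENNReal.rpow_one _
      have hD2 : eLpNorm (fun x => A x - a x) pe μ' ≤
          ENNReal.ofReal (12/(ρ * (1 - ρ)^n)) * L := by
        refine le_trans hDup ?_
        calc (ENNReal.ofReal (R^n))^(1/p) * (ENNReal.ofReal (3/ρ) * t)
            ≤ (ENNReal.ofReal (4/(1 - ρ)^n) * V^(1/p)) * (ENNReal.ofReal (3/ρ) * t) :=
              mul_le_mul' hWV le_rfl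
          _ = (ENNReal.ofReal (4/(1 - ρ)^n) * ENNReal.ofReal (3/ρ)) * (t * V^(1/p)) := by
              ring
          _ = ENNReal.ofReal (12/(ρ * (1 - ρ)^n)) * (t * V^(1/p)) := by
              rw [← ENNReal.ofReal_mul (by positivity)]
              congr 1
              field_simp
              ring
          _ ≤ _ := mul_le_mul' le_rfl hLlow
      have hmeas1 : AEStronglyMeasurable (fun x => u x - A x) μ' := by
        have h1 : AEStronglyMeasurable u μ' := by
          refine hu.1.mono_measure ?_
          rw [hμ', hμR]
          exact Measure.restrict_mono diff_subset le_rfl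
        exact h1.sub hAcont.aestronglyMeasurable
      have hmeas2 : AEStronglyMeasurable (fun x => A x - a x) μ' :=
        hAcont.aestronglyMeasurable.sub hacont.aestronglyMeasurable
      have htri : eLpNorm (fun x => u x - a x) pe μ' ≤
          L + eLpNorm (fun x => A x - a x) pe μ' := by
        have h0 : (fun x => u x - a x) =
            (fun x => u x - A x) + (fun x => A x - a x) := by
          funext x; simp only [Pi.add_apply]; abel
        rw [h0, hL]
        exact eLpNorm_add_le hmeas1 hmeas2 hpe1
      calc eLpNorm (fun x => u x - a x) pe μ'
          ≤ L + ENNReal.ofReal (12/(ρ * (1 - ρ)^n)) * L := le_trans htri (add_le_add le_rfl hD2)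
        _ = (1 + ENNReal.ofReal (12/(ρ * (1 - ρ)^n))) * L := by rw [add_mul, one_mul]
        _ = ENNReal.ofReal (1 + 12/(ρ * (1 - ρ)^n)) * L := by
            rw [ENNReal.ofReal_add (by norm_num) (by positivity), ENNReal.ofReal_one]
    · -- (iii)
      have hlin : a.linear = (M / s) • A.linear := by rw [ha, AffineMap.smul_linear]
      rw [hlin]
      simp only [LinearMap.smul_apply]
      rw [real_inner_smul_left, real_inner_smul_right, hskew x y]
      ring
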